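/- Let D₀ be a division ring and D₁ a commutative subring of D₀ (hence a field) such that D₀ has dimension m < ∞ as a right D₁-vector space and the characteristic of D₁ does not divide m. Then the D₀–D₁-bimodule M = D₀ (with left action by multiplication in D₀ and right action by multiplication by elements of D₁) has symmetric duals. -/

import Mathlib

section Bimod

/-- The right dual `Hom_S(N_S, S)` of a right `S`-module `N`
(right modules are treated as modules over the opposite ring). -/
abbrev RightDual (S : Type) [Ring S] (N : Type) [AddCommGroup N] [Module Sᵐᵒᵖ N] :
    Type := N →ₗ[Sᵐᵒᵖ] S

/-- The left dual `Hom_R(_R N, R)` of a left `R`-module `N`. -/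
abbrev LeftDual (R : Type) [Ring R] (N : Type) [AddCommGroup N] [Module R N] :
    Type := N →ₗ[R] R

variable (R S : Type) [Ring R] [Ring S]
variable (N : Type) [AddCommGroup N] [Module R N] [Module Sᵐᵒᵖ N]
  [SMulCommClass R Sᵐᵒᵖ N]

namespace RightDual

/-- If `N` is an `R`–`S`-bimodule, the right dual carries a right `R`-action by
precomposition with the left `R`-action: `(ψ • a) x = ψ (a • x)`. -/
instance : Module Rᵐᵒᵖ (RightDual S N) where
  smul a ψ := ψ.comp (DistribMulAction.toLinearMap Sᵐᵒᵖ N a.unop)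
  one_smul ψ := by
    apply LinearMap.ext; intro x
    show ψ ((1 : R) • x) = ψ x
    rw [one_smul]
  mul_smul a b ψ := by
    apply LinearMap.ext; intro x
    show ψ ((a * b).unop • x) = ψ (b.unop • a.unop • x)
    rw [MulOpposite.unop_mul, mul_smul]
  smul_zero a := by apply LinearMap.ext; intro x; rfl
  smul_add a ψ φ := by apply LinearMap.ext; intro x; rfl
  add_smul a b ψ := by
    apply LinearMap.ext; intro x
    show ψ ((a + b).unop • x) = ψ (a.unop • x) + ψ (b.unop • x)
    rw [MulOpposite.unop_add, add_smul, map_add]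
  zero_smul ψ := by
    apply LinearMap.ext; intro x
    show ψ ((0 : R) • x) = 0
    rw [zero_smul, map_zero]

@[simp] lemma opSMul_apply (a : Rᵐᵒᵖ) (ψ : RightDual S N) (x : N) :
    (a • ψ) x = ψ (a.unop • x) := rfl

@[simp] lemma smul_apply' (s : S) (ψ : RightDual S N) (x : N) :
    (s • ψ) x = s * ψ x := rfl

instance : SMulCommClass S Rᵐᵒᵖ (RightDual S N) where
  smul_comm s a ψ := by apply LinearMap.ext; intro x; rfl

end RightDual

namespace LeftDual

/-- If `N` is an `R`–`S`-bimodule, the left dual carries a left `S`-action by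
precomposition with the right `S`-action: `(b • ψ) x = ψ (x b)`. -/
noncomputable instance : Module S (LeftDual R N) where
  smul b ψ :=
    haveI : SMulCommClass Sᵐᵒᵖ R N := SMulCommClass.symm R Sᵐᵒᵖ N
    ψ.comp (DistribMulAction.toLinearMap R N (MulOpposite.op b))
  one_smul ψ := by
    apply LinearMap.ext; intro x
    show ψ ((MulOpposite.op (1:S)) • x) = ψ x
    rw [MulOpposite.op_one, one_smul]
  mul_smul a b ψ := by
    apply LinearMap.ext; intro x
    show ψ ((MulOpposite.op (a*b)) • x) = ψ (MulOpposite.op b • MulOpposite.op a • x)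
    rw [MulOpposite.op_mul, mul_smul]
  smul_zero a := by apply LinearMap.ext; intro x; rfl
  smul_add a ψ φ := by apply LinearMap.ext; intro x; rfl
  add_smul a b ψ := by
    apply LinearMap.ext; intro x
    show ψ ((MulOpposite.op (a+b)) • x) = ψ (MulOpposite.op a • x) + ψ (MulOpposite.op b • x)
    rw [MulOpposite.op_add, add_smul, map_add]
  zero_smul ψ := by
    apply LinearMap.ext; intro x
    show ψ ((MulOpposite.op (0:S)) • x) = 0
    rw [MulOpposite.op_zero, zero_smul, map_zero]

@[simp] lemma sSMul_apply (b : S) (ψ : LeftDual R N) (x : N) :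
    (b • ψ) x = ψ (MulOpposite.op b • x) := rfl

instance : SMulCommClass S Rᵐᵒᵖ (LeftDual R N) where
  smul_comm s a ψ := by apply LinearMap.ext; intro x; rfl

end LeftDual

end Bimod
section SymDual

variable (D₀ D₁ : Type) [DivisionRing D₀] [DivisionRing D₁]
variable (M : Type) [AddCommGroup M] [Module D₀ M] [Module D₁ᵐᵒᵖ M]
  [SMulCommClass D₀ D₁ᵐᵒᵖ M]

/-- A `D₀`–`D₁`-bimodule `M` *has symmetric duals* if `M` and `M*` are
finite-dimensional on the left and the right and there is a bimodule isomorphism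
`M ≅ M**` (a left `D₀`-linear equivalence commuting with the right `D₁`-actions). -/
def HasSymmetricDuals : Prop :=
  Module.Finite D₀ M ∧ Module.Finite D₁ᵐᵒᵖ M ∧
  Module.Finite D₁ (RightDual D₁ M) ∧ Module.Finite D₀ᵐᵒᵖ (RightDual D₁ M) ∧
  ∃ e : M ≃ₗ[D₀] RightDual D₀ (RightDual D₁ M),
    ∀ (b : D₁ᵐᵒᵖ) (x : M), e (b • x) = b • e x

end SymDual

section Statement2

variable (D₀ D₁ : Type) [DivisionRing D₀] [Field D₁]

/-- The right `D₁`-module structure on `D₀` obtained from a ring embedding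
`f : D₁ → D₀` exhibiting `D₁` as a (commutative) subring of `D₀`:
`x • b := x * f b`. -/
noncomputable def rightModViaEmbedding (f : D₁ →+* D₀) : Module D₁ᵐᵒᵖ D₀ :=
  Module.compHom D₀ (RingHom.op f)

section MainAux

open MulOpposite

theorem exists_functional {K V : Type} [Field K] [AddCommGroup V] [Module K V]
    (W : Submodule K V) (v : V) (hv : v ∉ W) :
    ∃ φ : V →ₗ[K] K, (∀ w ∈ W, φ w = 0) ∧ φ v = 1 := by
  have hv' : W.mkQ v ≠ 0 := by
    simpa [Submodule.Quotient.mk_eq_zero] using hv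
  obtain ⟨g, hg⟩ := LinearMap.exists_extend
    ((LinearEquiv.toSpanNonzeroSingleton K (V ⧸ W) (W.mkQ v) hv').symm.toLinearMap)
  refine ⟨g ∘ₗ W.mkQ, fun w hw => ?_, ?_⟩
  · have h0 : W.mkQ w = 0 := by
      simpa [Submodule.Quotient.mk_eq_zero] using hw
    simp [LinearMap.comp_apply, h0]
  · have h1 := congrArg (fun h : _ →ₗ[K] K =>
      h ⟨W.mkQ v, Submodule.mem_span_singleton_self _⟩) hg
    simp only [LinearMap.comp_apply, Submodule.subtype_apply] at h1
    have h2 : (LinearEquiv.toSpanNonzeroSingleton K (V ⧸ W) (W.mkQ v) hv').symm.toLinearMap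
        ⟨W.mkQ v, Submodule.mem_span_singleton_self _⟩ = 1 := by
      show (LinearEquiv.toSpanNonzeroSingleton K (V ⧸ W) (W.mkQ v) hv').symm
        ⟨W.mkQ v, Submodule.mem_span_singleton_self _⟩ = 1
      rw [← LinearEquiv.toSpanNonzeroSingleton_one K (V ⧸ W) (W.mkQ v) hv',
        LinearEquiv.symm_apply_apply]
    rw [LinearMap.comp_apply]
    rw [h1, h2]

theorem mainAux (D₀ D₁ : Type) [DivisionRing D₀] [Field D₁] (f : D₁ →+* D₀)
    [Module D₁ᵐᵒᵖ D₀] [SMulCommClass D₀ D₁ᵐᵒᵖ D₀]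
    (hsmul : ∀ (b : D₁ᵐᵒᵖ) (x : D₀), b • x = x * f b.unop)
    (hfin : Module.Finite D₁ᵐᵒᵖ D₀)
    (hchar : ((Module.finrank D₁ᵐᵒᵖ D₀ : ℕ) : D₁) ≠ 0) :
    HasSymmetricDuals D₀ D₁ D₀ := by
  classical
  haveI : Module.Finite D₁ᵐᵒᵖ D₀ := hfin
  -- `unop` as a `D₁ᵐᵒᵖ`-linear map `D₁ᵐᵒᵖ → D₁`
  let σ : D₁ᵐᵒᵖ →ₗ[D₁ᵐᵒᵖ] D₁ :=
    { toFun := unop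
      map_add' := fun a b => rfl
      map_smul' := fun a k => by
        show unop (a * k) = unop k * unop a
        rw [unop_mul] }
  -- `op` as a `D₁ᵐᵒᵖ`-linear map `D₁ → D₁ᵐᵒᵖ`
  let τ : D₁ →ₗ[D₁ᵐᵒᵖ] D₁ᵐᵒᵖ :=
    { toFun := op
      map_add' := fun a b => rfl
      map_smul' := fun a c => by
        show op (c * unop a) = a * op c
        rw [op_mul, op_unop] }
  -- left multiplication as a right-`D₁`-linear endomorphism
  let Lmul : D₀ → (D₀ →ₗ[D₁ᵐᵒᵖ] D₀) := fun u =>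
    { toFun := fun x => u * x
      map_add' := mul_add u
      map_smul' := fun b x => by
        show u * (b • x) = b • (u * x)
        rw [hsmul, hsmul, mul_assoc] }
  have hLmul_mul : ∀ u v : D₀, Lmul (u * v) = Lmul u ∘ₗ Lmul v := fun u v =>
    LinearMap.ext fun x => mul_assoc u v x
  have hLmul_add : ∀ u v : D₀, Lmul (u + v) = Lmul u + Lmul v := fun u v =>
    LinearMap.ext fun x => add_mul u v x
  have hLmul_sub : ∀ u v : D₀, Lmul (u - v) = Lmul u - Lmul v := fun u v =>
    LinearMap.ext fun x => sub_mul u v x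
  have hLmul_one : Lmul 1 = LinearMap.id := LinearMap.ext fun x => one_mul x
  have hLmul_zero : Lmul 0 = 0 := LinearMap.ext fun x => zero_mul x
  let Tr : D₀ → D₁ᵐᵒᵖ := fun u => LinearMap.trace D₁ᵐᵒᵖ D₀ (Lmul u)
  let W : Submodule D₁ᵐᵒᵖ D₀ :=
    Submodule.span D₁ᵐᵒᵖ {y | ∃ b x, y = f b * x - x * f b}
  have hTrS : ∀ (b : D₁) (x : D₀), Tr (f b * x - x * f b) = 0 := by
    intro b x
    show LinearMap.trace D₁ᵐᵒᵖ D₀ (Lmul _) = 0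
    rw [hLmul_sub, map_sub, hLmul_mul, hLmul_mul, ← Module.End.mul_eq_comp,
      ← Module.End.mul_eq_comp, LinearMap.trace_mul_comm, sub_self]
  have hTrW : ∀ y ∈ W, ∀ a : D₁ᵐᵒᵖ, Tr (a • y) = 0 := by
    intro y hy
    induction hy using Submodule.span_induction with
    | mem x hx =>
      intro a
      obtain ⟨b, z, rfl⟩ := hx
      have h3 : a • (f b * z - z * f b) = f b * (z * f a.unop) - (z * f a.unop) * f b := by
        rw [hsmul, sub_mul, mul_assoc]
        congr 1
        rw [mul_assoc, mul_assoc, ← map_mul, ← map_mul, mul_comm b a.unop]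
      rw [h3]; exact hTrS _ _
    | zero =>
      intro a
      rw [smul_zero]
      show LinearMap.trace D₁ᵐᵒᵖ D₀ (Lmul 0) = 0
      rw [hLmul_zero, map_zero]
    | add x y hx hy ihx ihy =>
      intro a
      rw [smul_add]
      show LinearMap.trace D₁ᵐᵒᵖ D₀ (Lmul (a • x + a • y)) = 0
      rw [hLmul_add, map_add]
      show Tr (a • x) + Tr (a • y) = 0
      rw [ihx a, ihy a, add_zero]
    | smul a x hx ih =>
      intro a'
      rw [smul_smul]
      exact ih (a' * a)
  have h1W : (1 : D₀) ∉ W := by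
    intro h
    have h0 := hTrW 1 h 1
    rw [one_smul] at h0
    have hTr1 : Tr 1 = ((Module.finrank D₁ᵐᵒᵖ D₀ : ℕ) : D₁ᵐᵒᵖ) := by
      show LinearMap.trace D₁ᵐᵒᵖ D₀ (Lmul 1) = _
      rw [hLmul_one, LinearMap.trace_id]
    rw [hTr1] at h0
    apply hchar
    have := congrArg unop h0
    simpa using this
  obtain ⟨φ, hφW, hφ1⟩ := exists_functional W 1 h1W
  let ψ₀ : RightDual D₁ D₀ := σ ∘ₗ φ
  have hψ₀bal : ∀ (b : D₁) (x : D₀), ψ₀ (f b * x) = b * ψ₀ x := by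
    intro b x
    have hmem : f b * x - x * f b ∈ W := Submodule.subset_span ⟨b, x, rfl⟩
    have h0 : φ (f b * x) = φ (x * f b) := by
      have h4 := hφW _ hmem
      rw [map_sub, sub_eq_zero] at h4
      exact h4
    show σ (φ (f b * x)) = b * σ (φ x)
    rw [h0, show x * f b = (op b : D₁ᵐᵒᵖ) • x from by rw [hsmul, unop_op], map_smul]
    show unop ((op b) * φ x) = b * unop (φ x)
    rw [unop_mul, unop_op, mul_comm]
  have hψ₀1 : ψ₀ (1 : D₀) = 1 := by
    show σ (φ 1) = 1
    rw [hφ1]; rfl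
  have hψ₀op : ∀ (a x : D₀), ((op a • ψ₀ : RightDual D₁ D₀) : RightDual D₁ D₀) x
      = ψ₀ (a * x) := fun a x => rfl
  -- the D₁ᵐᵒᵖ-linear functionals x ↦ op (ψ₀ (a * x))
  let Θ : D₀ → Module.Dual D₁ᵐᵒᵖ D₀ := fun a => τ ∘ₗ ((op a • ψ₀ : RightDual D₁ D₀) : D₀ →ₗ[D₁ᵐᵒᵖ] D₁)
  have hΘ : ∀ a x, Θ a x = op (ψ₀ (a * x)) := fun a x => rfl
  have hΘadd : ∀ a a', Θ a + Θ a' = Θ (a + a') := by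
    intro a a'
    apply LinearMap.ext; intro x
    show Θ a x + Θ a' x = Θ (a + a') x
    rw [hΘ, hΘ, hΘ, add_mul, map_add]
    rfl
  have hΘsmul : ∀ (k : D₁ᵐᵒᵖ) (a : D₀), k • Θ a = Θ (f k.unop * a) := by
    intro k a
    apply LinearMap.ext; intro x
    show k • (Θ a x) = Θ (f k.unop * a) x
    rw [hΘ, hΘ, mul_assoc, hψ₀bal]
    show k * op (ψ₀ (a * x)) = op (k.unop * ψ₀ (a * x))
    rw [op_mul, op_unop, mul_comm]
  let U' : Submodule D₁ᵐᵒᵖ (Module.Dual D₁ᵐᵒᵖ D₀) :=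
    { carrier := Set.range Θ
      add_mem' := by rintro _ _ ⟨a, rfl⟩ ⟨a', rfl⟩; exact ⟨a + a', (hΘadd a a').symm⟩
      zero_mem' := by
        refine ⟨0, ?_⟩
        apply LinearMap.ext; intro x
        rw [hΘ, zero_mul, map_zero, op_zero]
        rfl
      smul_mem' := by rintro k _ ⟨a, rfl⟩; exact ⟨f k.unop * a, (hΘsmul k a).symm⟩ }
  have hU'top : U' = ⊤ := by
    by_contra h
    obtain ⟨lam0, hlam0⟩ : ∃ z, z ∉ U' := by
      by_contra h2
      push_neg at h2
      exact h (Submodule.eq_top_iff'.2 h2)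
    obtain ⟨Ξ, hΞU, hXilam⟩ := exists_functional U' lam0 hlam0
    set x := (Module.evalEquiv D₁ᵐᵒᵖ D₀).symm Ξ with hxdef
    have hxev : ∀ lam : Module.Dual D₁ᵐᵒᵖ D₀, lam x = Ξ lam := fun lam =>
      Module.apply_evalEquiv_symm_apply D₁ᵐᵒᵖ D₀ lam Ξ
    have hψx : ∀ a : D₀, ψ₀ (a * x) = 0 := by
      intro a
      have h3 : Θ a x = 0 := by rw [hxev]; exact hΞU _ ⟨a, rfl⟩
      rw [hΘ] at h3
      exact op_injective (by simpa using h3)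
    have hx0 : x ≠ 0 := by
      intro h4
      have h5 := hxev lam0
      rw [h4, map_zero, hXilam] at h5
      exact zero_ne_one h5
    have h6 := hψx x⁻¹
    rw [inv_mul_cancel₀ hx0, hψ₀1] at h6
    exact one_ne_zero h6
  have hsurj : ∀ ψ : RightDual D₁ D₀, ∃ a : D₀, (op a • ψ₀ : RightDual D₁ D₀) = ψ := by
    intro ψ
    have hmem : τ ∘ₗ (ψ : D₀ →ₗ[D₁ᵐᵒᵖ] D₁) ∈ U' := hU'top ▸ Submodule.mem_top
    obtain ⟨a, ha⟩ := hmem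
    refine ⟨a, LinearMap.ext fun x => ?_⟩
    have h7 := congrArg (fun lam : Module.Dual D₁ᵐᵒᵖ D₀ => unop (lam x)) ha
    simp only [hΘ, LinearMap.comp_apply] at h7
    show ψ₀ (a * x) = ψ x
    exact h7
  have hinj' : Function.Injective (fun a : D₀ => (op a • ψ₀ : RightDual D₁ D₀)) := by
    intro a a' h
    by_contra hne
    have hd : a - a' ≠ 0 := sub_ne_zero.2 hne
    have h8 : ∀ x, ψ₀ ((a - a') * x) = 0 := by
      intro x
      have h9 := congrArg (fun ψ : RightDual D₁ D₀ => ψ x) h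
      simp only at h9
      rw [hψ₀op, hψ₀op] at h9
      rw [sub_mul, map_sub, h9, sub_self]
    have h10 := h8 (a - a')⁻¹
    rw [mul_inv_cancel₀ hd, hψ₀1] at h10
    exact one_ne_zero h10
  let A : D₀ ≃ RightDual D₁ D₀ :=
    Equiv.ofBijective (fun a : D₀ => (op a • ψ₀ : RightDual D₁ D₀)) ⟨hinj', hsurj⟩
  let c : RightDual D₁ D₀ → D₀ := A.symm
  have hcA : ∀ ψ : RightDual D₁ D₀, (op (c ψ) • ψ₀ : RightDual D₁ D₀) = ψ := fun ψ =>
    A.apply_symm_apply ψ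
  have hc_spec : ∀ a : D₀, c (op a • ψ₀ : RightDual D₁ D₀) = a := fun a =>
    A.symm_apply_apply a
  have hc_eval : ∀ (ψ : RightDual D₁ D₀) (x : D₀), ψ x = ψ₀ (c ψ * x) := by
    intro ψ x
    conv_lhs => rw [← hcA ψ]
    exact hψ₀op _ _
  have hc_add : ∀ ψ ψ' : RightDual D₁ D₀, c (ψ + ψ') = c ψ + c ψ' := by
    intro ψ ψ'
    have h11 : (op (c ψ + c ψ') • ψ₀ : RightDual D₁ D₀) = ψ + ψ' := by
      rw [op_add, add_smul, hcA, hcA]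
    rw [← h11, hc_spec]
  have hc_mulop : ∀ (ψ : RightDual D₁ D₀) (d : D₀),
      c ((op d) • ψ : RightDual D₁ D₀) = c ψ * d := by
    intro ψ d
    have h12 : (op (c ψ * d) • ψ₀ : RightDual D₁ D₀) = op d • ψ := by
      rw [op_mul, mul_smul, hcA]
    rw [← h12, hc_spec]
  have hc_smulD₁ : ∀ (b : D₁) (ψ : RightDual D₁ D₀),
      c (b • ψ : RightDual D₁ D₀) = f b * c ψ := by
    intro b ψ
    have h13 : (op (f b * c ψ) • ψ₀ : RightDual D₁ D₀) = b • ψ := by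
      apply LinearMap.ext; intro w
      rw [hψ₀op, mul_assoc, hψ₀bal, ← hc_eval]
      rfl
    rw [← h13, hc_spec]
  have hcψ₀ : c ψ₀ = 1 := by
    have h14 : (op (1 : D₀) • ψ₀ : RightDual D₁ D₀) = ψ₀ := by rw [op_one, one_smul]
    rw [← h14, hc_spec]
  -- the double-dual element attached to `x : D₀`
  let E0 : D₀ → RightDual D₀ (RightDual D₁ D₀) := fun x =>
    { toFun := fun ψ => x * c ψ
      map_add' := fun ψ ψ' => by
        show x * c (ψ + ψ') = x * c ψ + x * c ψ'
        rw [hc_add, mul_add]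
      map_smul' := fun r ψ => by
        show x * c (r • ψ) = (RingHom.id D₀ᵐᵒᵖ) r • (x * c ψ)
        rw [RingHom.id_apply, ← op_unop r, hc_mulop]
        show x * (c ψ * r.unop) = (x * c ψ) * r.unop
        rw [mul_assoc] }
  have hE0_apply : ∀ (x : D₀) (ψ : RightDual D₁ D₀), E0 x ψ = x * c ψ := fun _ _ => rfl
  refine ⟨inferInstance, hfin, ?_, ?_, ?_⟩
  · -- Module.Finite D₁ (RightDual D₁ D₀)
    let n := Module.finrank D₁ᵐᵒᵖ D₀
    let B : Module.Basis (Fin n) D₁ᵐᵒᵖ D₀ := Module.finBasis D₁ᵐᵒᵖ D₀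
    let χ : Fin n → RightDual D₁ D₀ := fun i => σ ∘ₗ B.coord i
    let g : (Fin n → D₁) →ₗ[D₁] RightDual D₁ D₀ :=
      { toFun := fun v => ∑ i, v i • χ i
        map_add' := fun v w => by
          simp only [Pi.add_apply, add_smul]
          rw [Finset.sum_add_distrib]
        map_smul' := fun cc v => by
          simp only [Pi.smul_apply, smul_eq_mul, RingHom.id_apply, mul_smul]
          rw [Finset.smul_sum] }
    apply Module.Finite.of_surjective g
    intro ψ
    refine ⟨fun i => ψ (B i), ?_⟩
    apply LinearMap.ext; intro x
    show (∑ i, ψ (B i) • χ i) x = ψ x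
    rw [LinearMap.sum_apply]
    conv_rhs => rw [← B.sum_repr x]
    rw [map_sum]
    refine Finset.sum_congr rfl fun i _ => ?_
    show (ψ (B i) • χ i) x = ψ (B.repr x i • B i)
    rw [map_smul]
    show ψ (B i) * σ (B.coord i x) = B.repr x i • ψ (B i)
    rw [Module.Basis.coord_apply]
    rfl
  · -- Module.Finite D₀ᵐᵒᵖ (RightDual D₁ D₀)
    refine ⟨⟨{ψ₀}, ?_⟩⟩
    rw [Finset.coe_singleton, Submodule.eq_top_iff']
    intro ψ
    obtain ⟨a, ha⟩ := hsurj ψ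
    rw [← ha]
    exact Submodule.smul_mem _ _ (Submodule.subset_span (Set.mem_singleton _))
  · -- the bimodule isomorphism
    refine ⟨{ toFun := E0
              map_add' := fun x y => by
                apply LinearMap.ext; intro ψ
                show (x + y) * c ψ = x * c ψ + y * c ψ
                rw [add_mul]
              map_smul' := fun d x => by
                apply LinearMap.ext; intro ψ
                show (d * x) * c ψ = d * (x * c ψ)
                rw [mul_assoc]
              invFun := fun Φ => Φ ψ₀
              left_inv := fun x => by
                show E0 x ψ₀ = x
                rw [hE0_apply, hcψ₀, mul_one]
              right_inv := fun Φ => by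
                apply LinearMap.ext; intro ψ
                show Φ ψ₀ * c ψ = Φ ψ
                conv_rhs => rw [← hcA ψ]
                rw [map_smul]
                rfl }, ?_⟩
    intro b x
    apply LinearMap.ext; intro ψ
    show (b • x) * c ψ = E0 x (b.unop • ψ)
    rw [hsmul, hE0_apply, hc_smulD₁, ← mul_assoc]

end MainAux
/-- If `D₁` is a commutative subring of the division ring `D₀` (via a
ring embedding `f`), `[D₀ : D₁] = m < ∞` as a right `D₁`-vector space and
`char D₁ ∤ m`, then the `D₀`–`D₁`-bimodule `M = D₀` (left action by multiplication,
right action via `f`) has symmetric duals. -/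
theorem statement2 (f : D₁ →+* D₀) (hinj : Function.Injective f) (m : ℕ)
    (hfin : letI := rightModViaEmbedding D₀ D₁ f; Module.Finite D₁ᵐᵒᵖ D₀)
    (hdim : letI := rightModViaEmbedding D₀ D₁ f; Module.finrank D₁ᵐᵒᵖ D₀ = m)
    (hchar : (m : D₁) ≠ 0) :
    letI : Module D₁ᵐᵒᵖ D₀ := rightModViaEmbedding D₀ D₁ f
    letI : SMulCommClass D₀ D₁ᵐᵒᵖ D₀ :=
      ⟨fun a b x => (mul_assoc a x (f b.unop)).symm⟩
    HasSymmetricDuals D₀ D₁ D₀ := by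
  letI : Module D₁ᵐᵒᵖ D₀ := rightModViaEmbedding D₀ D₁ f
  letI : SMulCommClass D₀ D₁ᵐᵒᵖ D₀ :=
    ⟨fun a b x => (mul_assoc a x (f b.unop)).symm⟩
  exact mainAux D₀ D₁ f (fun b x => rfl) hfin (by rw [hdim]; exact hchar)

end Statement2
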